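/- Let S_λ be a weighted shift on a directed tree T with weights λ = {λ_v}_{v∈V°} such that the linear span of {e_u : u ∈ V} is contained in D^∞(S_λ), and let u ∈ V have at least one child. Suppose for every v ∈ Chi(u) the sequence {‖S_λ^n e_v‖²}_{n=0}^∞ is a Stieltjes moment sequence with a representing measure μ_v. If {‖S_λ^n e_u‖²}_{n=0}^∞ is a Stieltjes moment sequence and {‖S_λ^{n+1} e_u‖²}_{n=0}^∞ is determinate, then ∑_{v∈Chi(u)} |λ_v|² ∫_{[0,∞)} (1/s) dμ_v(s) ≤ 1, the Stieltjes moment sequence {‖S_λ^n e_u‖²}_{n=0}^∞ is determinate, and its unique representing measure μ_u is given by μ_u(σ) = ∑_{v∈Chi(u)} |λ_v|² ∫_σ (1/s) dμ_v(s) + ε_u δ₀(σ) with ε_u = 1 − ∑_{v∈Chi(u)} |λ_v|² ∫_{[0,∞)} (1/s) dμ_v(s). -/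

import Mathlib

open MeasureTheory ENNReal
open scoped NNReal
noncomputable section

/-- `μ` is a representing measure of the sequence `t`. -/
def IsRepMeasure (μ : Measure ℝ≥0) (t : ℕ → ℝ) : Prop :=
  ∀ n : ℕ, Integrable (fun s : ℝ≥0 => (s : ℝ) ^ n) μ ∧ t n = ∫ s, (s : ℝ) ^ n ∂μ

/-- `t` is a Stieltjes moment sequence. -/
def IsStieltjesMoment (t : ℕ → ℝ) : Prop := ∃ μ : Measure ℝ≥0, IsRepMeasure μ t

/-- `t` is a determinate Stieltjes moment sequence. -/
def IsDetStieltjesMoment (t : ℕ → ℝ) : Prop := ∃! μ : Measure ℝ≥0, IsRepMeasure μ t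

section Operators

universe u
variable {H : Type u} [NormedAddCommGroup H] [InnerProductSpace ℂ H]

/-- The maximal domain of the composition `S ∘ T`. -/
def compDomain (S T : H →ₗ.[ℂ] H) : Submodule ℂ H where
  carrier := {x | ∃ hx : x ∈ T.domain, T ⟨x, hx⟩ ∈ S.domain}
  zero_mem' := ⟨T.domain.zero_mem, by
    have h0 : (⟨0, T.domain.zero_mem⟩ : T.domain) = 0 := rfl
    rw [h0, LinearPMap.map_zero]; exact S.domain.zero_mem⟩
  add_mem' := by
    rintro x y ⟨hx, hx'⟩ ⟨hy, hy'⟩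
    refine ⟨T.domain.add_mem hx hy, ?_⟩
    have : (⟨x + y, T.domain.add_mem hx hy⟩ : T.domain) = ⟨x, hx⟩ + ⟨y, hy⟩ := rfl
    rw [this, LinearPMap.map_add]
    exact S.domain.add_mem hx' hy'
  smul_mem' := by
    rintro c x ⟨hx, hx'⟩
    refine ⟨T.domain.smul_mem c hx, ?_⟩
    have : (⟨c • x, T.domain.smul_mem c hx⟩ : T.domain) = c • (⟨x, hx⟩ : T.domain) := rfl
    rw [this, LinearPMap.map_smul]
    exact S.domain.smul_mem c hx'

/-- Composition `S ∘ T` of partial operators, on the maximal domain. -/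
def pmapComp (S T : H →ₗ.[ℂ] H) : H →ₗ.[ℂ] H :=
  S.comp (T.domRestrict (compDomain S T)) (by
    rintro ⟨x, hx⟩
    have hxT : x ∈ T.domain := (Submodule.mem_inf.mp hx).2
    have hxD : x ∈ compDomain S T := (Submodule.mem_inf.mp hx).1
    first
      | exact hxD.choose_spec
      | (rw [LinearPMap.domRestrict_apply (x' := ⟨x, hxT⟩) rfl]; exact hxD.choose_spec))

/-- Powers of a partial operator: `pmapPow S n = Sⁿ` with its natural domain. -/
def pmapPow (S : H →ₗ.[ℂ] H) : ℕ → (H →ₗ.[ℂ] H)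
  | 0 => LinearMap.id.toPMap ⊤
  | n + 1 => pmapComp (pmapPow S n) S

open Classical in
/-- Total (junk-valued) application of the power `Sⁿ`. -/
def powApp (S : H →ₗ.[ℂ] H) (n : ℕ) (x : H) : H :=
  if h : x ∈ (pmapPow S n).domain then (pmapPow S n) ⟨x, h⟩ else 0

/-- The set of `C^∞`-vectors of `S`. -/
def Dinf (S : H →ₗ.[ℂ] H) : Set H := {x | ∀ n : ℕ, x ∈ (pmapPow S n).domain}

/-- `F` is a core of `S`. -/
def IsCore (S : H →ₗ.[ℂ] H) (F : Submodule ℂ H) : Prop :=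
  F ≤ S.domain ∧ (S.graph : Set (H × H)) ⊆ closure ((S.domRestrict F).graph : Set (H × H))

end Operators
section Operators
universe u
variable {H : Type u} [NormedAddCommGroup H] [InnerProductSpace ℂ H]

/-- A normal (unbounded) operator: closed, densely defined, with `D(N*) = D(N)` and
`‖N* x‖ = ‖N x‖` on the common domain. -/
def IsNormalOp [CompleteSpace H] (N : H →ₗ.[ℂ] H) : Prop :=
  Dense (N.domain : Set H) ∧ N.IsClosed ∧ N.adjoint.domain = N.domain ∧
    ∀ (x : H) (hx : x ∈ N.domain) (hx' : x ∈ N.adjoint.domain),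
      ‖N.adjoint ⟨x, hx'⟩‖ = ‖N ⟨x, hx⟩‖

/-- A subnormal operator: densely defined with a normal extension in a possibly
larger Hilbert space. -/
def IsSubnormal {H : Type u} [NormedAddCommGroup H] [InnerProductSpace ℂ H]
    (S : H →ₗ.[ℂ] H) : Prop :=
  Dense (S.domain : Set H) ∧
  ∃ (K : Type u) (_ : NormedAddCommGroup K) (_ : InnerProductSpace ℂ K) (_ : CompleteSpace K)
    (J : H →ₗᵢ[ℂ] K) (N : K →ₗ.[ℂ] K), IsNormalOp N ∧
      ∀ x : S.domain, ∃ hx : J x ∈ N.domain, N ⟨J x, hx⟩ = J (S x)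

/-- A hyponormal operator. -/
def IsHyponormal [CompleteSpace H] (S : H →ₗ.[ℂ] H) : Prop :=
  Dense (S.domain : Set H) ∧
  ∀ (x : H) (hx : x ∈ S.domain), ∃ hx' : x ∈ S.adjoint.domain,
      ‖S.adjoint ⟨x, hx'⟩‖ ≤ ‖S ⟨x, hx⟩‖

end Operators

/-- A directed tree on the vertex set `V`: a connected directed graph without circuits
in which every non-root vertex has a unique parent. -/
structure DirectedTree (V : Type*) where
  edge : V → V → Prop
  connected : ∀ u v : V, Relation.ReflTransGen (fun a b => edge a b ∨ edge b a) u v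
  no_circuits : ∀ v : V, ¬ Relation.TransGen edge v v
  parent_unique : ∀ u v w : V, edge v u → edge w u → v = w

namespace DirectedTree

variable {V : Type*}

/-- The roots: vertices with no incoming edge. -/
def isRoot (T : DirectedTree V) (v : V) : Prop := ¬ ∃ u : V, T.edge u v

/-- `V°`: the non-root vertices, i.e. vertices having a parent. -/
def nonRoot (T : DirectedTree V) (v : V) : Prop := ∃ u : V, T.edge u v

open Classical in
/-- The parent function (with junk value at roots). -/
def par (T : DirectedTree V) (v : V) : V := if h : ∃ u : V, T.edge u v then h.choose else v

/-- The set of children of a vertex. -/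
def chi (T : DirectedTree V) (u : V) : Set V := {v | T.edge u v}

/-- Iterated children `Chi^n(u)`. -/
def chiN (T : DirectedTree V) : ℕ → V → Set V
  | 0, u => {u}
  | n + 1, u => ⋃ w ∈ T.chiN n u, T.chi w

/-- The descendants of `u`. -/
def des (T : DirectedTree V) (u : V) : Set V := ⋃ n : ℕ, T.chiN n u

/-- `T` is leafless: every vertex has a child. -/
def Leafless (T : DirectedTree V) : Prop := ∀ u : V, ∃ v : V, T.edge u v

/-- The product `λ_{u∣v} = ∏_{j=0}^{n-1} λ_{par^j(v)}` of the weights along the path of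
length `n` ending at `v` (for `v ∈ Chi^n(u)` this is the usual `λ_{u∣v}`). -/
def pathProd (T : DirectedTree V) (lam : V → ℂ) (n : ℕ) (v : V) : ℂ :=
  ∏ j ∈ Finset.range n, lam (T.par^[j] v)

open Classical in
/-- The formal weighted-shift transformation `Λ_T` on families of complex numbers. -/
def lamMap (T : DirectedTree V) (lam : V → ℂ) (f : V → ℂ) : V → ℂ :=
  fun v => if T.nonRoot v then lam v * f (T.par v) else 0

variable (T : DirectedTree V)

theorem lamMap_add (lam : V → ℂ) (f g : V → ℂ) :
    T.lamMap lam (f + g) = T.lamMap lam f + T.lamMap lam g := by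
  funext v; simp only [lamMap, Pi.add_apply]; split <;> ring

theorem lamMap_smul (lam : V → ℂ) (c : ℂ) (f : V → ℂ) :
    T.lamMap lam (c • f) = c • T.lamMap lam f := by
  funext v; simp only [lamMap, Pi.smul_apply, smul_eq_mul]; split <;> ring

theorem lamMap_zero (lam : V → ℂ) : T.lamMap lam (0 : V → ℂ) = 0 := by
  funext v; simp [lamMap]

/-- The domain of the weighted shift `S_λ`. -/
def shiftDomain (lam : V → ℂ) : Submodule ℂ (lp (fun _ : V => ℂ) 2) where
  carrier := {f | Memℓp (T.lamMap lam f) 2}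
  zero_mem' := by
    rw [Set.mem_setOf_eq, lp.coeFn_zero, lamMap_zero]
    exact zero_memℓp
  add_mem' := by
    intro f g hf hg
    rw [Set.mem_setOf_eq, lp.coeFn_add, lamMap_add]
    exact hf.add hg
  smul_mem' := by
    intro c f hf
    rw [Set.mem_setOf_eq, lp.coeFn_smul, lamMap_smul]
    exact hf.const_smul c

/-- The weighted shift `S_λ` on the directed tree `T`, as a partial operator in `ℓ²(V)`. -/
def shift (lam : V → ℂ) : lp (fun _ : V => ℂ) 2 →ₗ.[ℂ] lp (fun _ : V => ℂ) 2 where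
  domain := T.shiftDomain lam
  toFun :=
    { toFun := fun f => (⟨T.lamMap lam f, f.2⟩ : lp (fun _ : V => ℂ) 2)
      map_add' := by
        rintro f g
        apply lp.ext
        rw [lp.coeFn_add]
        show T.lamMap lam
            ((((f : lp (fun _ : V => ℂ) 2) : V → ℂ)) + (((g : lp (fun _ : V => ℂ) 2) : V → ℂ)))
          = T.lamMap lam ((f : lp (fun _ : V => ℂ) 2) : V → ℂ)
            + T.lamMap lam ((g : lp (fun _ : V => ℂ) 2) : V → ℂ)
        exact T.lamMap_add lam _ _
      map_smul' := by
        rintro c f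
        apply lp.ext
        rw [lp.coeFn_smul]
        show T.lamMap lam (c • (((f : lp (fun _ : V => ℂ) 2) : V → ℂ)))
          = c • T.lamMap lam ((f : lp (fun _ : V => ℂ) 2) : V → ℂ)
        exact T.lamMap_smul lam c _ }

end DirectedTree

open Classical in
/-- The basis vector `e_u` of `ℓ²(V)`. -/
def eVec {V : Type*} (u : V) : lp (fun _ : V => ℂ) 2 := lp.single 2 u 1

section MoreDefs
universe u
variable {H : Type u} [NormedAddCommGroup H] [InnerProductSpace ℂ H]

/-- The inner product, linear in the FIRST argument (the paper's convention). -/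
def innerPaper (x y : H) : ℂ := inner ℂ y x

/-- The moment sequence `n ↦ ‖Sⁿ f‖²` generated by the vector `f`. -/
def momentSeq (S : H →ₗ.[ℂ] H) (f : H) : ℕ → ℝ := fun n => ‖powApp S n f‖ ^ 2

/-- `f` is a quasi-analytic vector of `S` : `f ∈ D^∞(S)` and
`∑ₙ ‖Sⁿ f‖^{-1/n} = ∞` (with `1/0 = ∞`). -/
def IsQuasiAnalyticVec (S : H →ₗ.[ℂ] H) (f : H) : Prop :=
  (∀ n : ℕ, f ∈ (pmapPow S n).domain) ∧
  ∑' n : ℕ, ((‖powApp S (n + 1) f‖₊ ^ ((1 : ℝ) / (n + 1)) : ℝ≥0) : ℝ≥0∞)⁻¹ = ∞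

end MoreDefs

/-- The consistency condition `μ_u(σ) = ∑_{v ∈ Chi(u)} |λ_v|² ∫_σ (1/s) dμ_v(s) + ε_u δ₀(σ)`
at the vertex `u` (with the convention `1/0 = ∞`). -/
def consistentAt {V : Type*} (T : DirectedTree V) (lam : V → ℂ) (μ : V → MeasureTheory.Measure ℝ≥0)
    (ε : V → ℝ≥0) (u : V) : Prop :=
  ∀ σ : Set ℝ≥0, MeasurableSet σ →
    μ u σ = (∑' v : {v : V // T.edge u v},
        (‖lam (v : V)‖₊ : ℝ≥0∞) ^ 2 * ∫⁻ s in σ, ((s : ℝ≥0∞))⁻¹ ∂(μ (v : V)))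
      + (ε u : ℝ≥0∞) * MeasureTheory.Measure.dirac (0 : ℝ≥0) σ

/-- The sequence `{ϑ, t₀, t₁, t₂, …}` obtained by prepending `ϑ` to `t`. -/
def shiftedSeq (ϑ : ℝ) (t : ℕ → ℝ) : ℕ → ℝ := fun n => match n with
  | 0 => ϑ
  | n + 1 => t n

/-- A positive definite sequence of real numbers. -/
def IsPosDefSeq (t : ℕ → ℝ) : Prop :=
  ∀ (n : ℕ) (α : ℕ → ℂ),
    0 ≤ (∑ k ∈ Finset.range (n + 1), ∑ l ∈ Finset.range (n + 1),
        (t (k + l) : ℂ) * α k * (starRingEnd ℂ) (α l)).re ∧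
    (∑ k ∈ Finset.range (n + 1), ∑ l ∈ Finset.range (n + 1),
        (t (k + l) : ℂ) * α k * (starRingEnd ℂ) (α l)).im = 0


section Aux
universe u
variable {H : Type u} [NormedAddCommGroup H] [InnerProductSpace ℂ H]

theorem pmap_congr (S : H →ₗ.[ℂ] H) (a b : S.domain) (h : (a : H) = (b : H)) : S a = S b := by
  congr 1; exact Subtype.ext h

theorem pcomp_apply (g f : H →ₗ.[ℂ] H) (hc : ∀ x : f.domain, f x ∈ g.domain) (x : f.domain) :
    (g.comp f hc) x = g ⟨f x, hc x⟩ := rfl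

theorem powApp_of_mem {S : H →ₗ.[ℂ] H} {n : ℕ} {x : H} (h : x ∈ (pmapPow S n).domain) :
    powApp S n x = (pmapPow S n) ⟨x, h⟩ := by
  rw [powApp, dif_pos h]

theorem mem_pow_succ {S : H →ₗ.[ℂ] H} {x : H} {n : ℕ}
    (h : x ∈ (pmapPow S (n+1)).domain) :
    ∃ hx : x ∈ S.domain, S ⟨x, hx⟩ ∈ (pmapPow S n).domain := by
  have : x ∈ (compDomain (pmapPow S n) S ⊓ S.domain : Submodule ℂ H) := h
  exact (Submodule.mem_inf.mp this).1

theorem powApp_zero (S : H →ₗ.[ℂ] H) (x : H) : powApp S 0 x = x := by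
  have h : x ∈ (pmapPow S 0).domain := Submodule.mem_top
  rw [powApp_of_mem h]; rfl

theorem powApp_succ {S : H →ₗ.[ℂ] H} {x : H} {n : ℕ}
    (h : x ∈ (pmapPow S (n+1)).domain) (hx : x ∈ S.domain) :
    powApp S (n+1) x = powApp S n (S ⟨x, hx⟩) := by
  obtain ⟨hx', hSx⟩ := mem_pow_succ h
  have heq : S ⟨x, hx'⟩ = S ⟨x, hx⟩ := pmap_congr S _ _ rfl
  have hSx2 : S ⟨x, hx⟩ ∈ (pmapPow S n).domain := heq ▸ hSx
  rw [powApp_of_mem h, powApp_of_mem hSx2]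
  show pmapComp (pmapPow S n) S ⟨x, h⟩ = _
  unfold pmapComp
  refine (pcomp_apply _ _ _ _).trans ?_
  refine pmap_congr _ _ _ ?_
  show (S.domRestrict (compDomain (pmapPow S n) S)) ⟨x, h⟩ = S ⟨x, hx⟩
  exact LinearPMap.domRestrict_apply rfl

end Aux

section TreeAux
open DirectedTree
variable {V : Type*}

open Classical in
/-- The coefficient `c_n(w)`. -/
def cseq (T : DirectedTree V) (lam : V → ℂ) : ℕ → V → ℂ
  | 0, _ => 1
  | n+1, w => if T.nonRoot w then lam w * cseq T lam n (T.par w) else 0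

variable (T : DirectedTree V) (lam : V → ℂ)

theorem cseq_zero (w : V) : cseq T lam 0 w = 1 := rfl

open Classical in
theorem cseq_succ (n : ℕ) (w : V) :
    cseq T lam (n+1) w = if T.nonRoot w then lam w * cseq T lam n (T.par w) else 0 := rfl

theorem edge_par {v : V} (h : T.nonRoot v) : T.edge (T.par v) v := by
  have h' : ∃ u, T.edge u v := h
  rw [DirectedTree.par, dif_pos h']
  exact h'.choose_spec

theorem par_eq {u v : V} (h : T.edge u v) : T.par v = u :=
  T.parent_unique v _ u (edge_par T ⟨u, h⟩) h

open Classical in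
theorem lamMap_apply (f : V → ℂ) (w : V) :
    T.lamMap lam f w = if T.nonRoot w then lam w * f (T.par w) else 0 := rfl

theorem lamMap_iterate (f : V → ℂ) : ∀ (n : ℕ) (w : V),
    (T.lamMap lam)^[n] f w = cseq T lam n w * f (T.par^[n] w)
  | 0, w => by simp [cseq_zero]
  | n+1, w => by
    classical
    rw [Function.iterate_succ_apply']
    show T.lamMap lam ((T.lamMap lam)^[n] f) w = _
    rw [lamMap_apply, cseq_succ]
    by_cases h : T.nonRoot w
    · rw [if_pos h, if_pos h, lamMap_iterate f n (T.par w),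
        ← Function.iterate_succ_apply, mul_assoc]
    · rw [if_neg h, if_neg h, zero_mul]

open Classical in
theorem cseq_succ' : ∀ (n : ℕ) (w : V), cseq T lam (n+1) w
    = cseq T lam n w * (if T.nonRoot (T.par^[n] w) then lam (T.par^[n] w) else 0)
  | 0, w => by
    rw [cseq_succ, cseq_zero]
    simp only [Function.iterate_zero, id_eq, one_mul]
    split <;> simp [cseq_zero, *]
  | n+1, w => by
    rw [cseq_succ]
    by_cases h : T.nonRoot w
    · rw [if_pos h, cseq_succ' n (T.par w), cseq_succ, if_pos h,
        ← Function.iterate_succ_apply, mul_assoc]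
    · rw [if_neg h, cseq_succ, if_neg h, zero_mul]

open Classical in
theorem eVec_coe (v w : V) : (eVec v : lp (fun _ : V => ℂ) 2) w = if w = v then 1 else 0 := by
  rw [eVec, lp.single_apply]
  simp [Pi.single_apply]

end TreeAux

section SumAux
open DirectedTree
variable {V : Type*} (T : DirectedTree V) (lam : V → ℂ)

theorem tsum_iter_succ (u : V) (n : ℕ) :
    ∑' w : V, ((‖(T.lamMap lam)^[n+1] (⇑(eVec u)) w‖₊ : ℝ≥0∞)) ^ 2
      = ∑' v : {v : V // T.edge u v}, (‖lam (v : V)‖₊ : ℝ≥0∞) ^ 2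
          * ∑' w : V, ((‖(T.lamMap lam)^[n] (⇑(eVec (v : V))) w‖₊ : ℝ≥0∞)) ^ 2 := by
  classical
  rw [tsum_congr (fun v : {v : V // T.edge u v} =>
    (ENNReal.tsum_mul_left (a := (‖lam (v : V)‖₊ : ℝ≥0∞) ^ 2)).symm), ENNReal.tsum_comm]
  refine tsum_congr fun w => ?_
  rw [tsum_congr (fun v : {v : V // T.edge u v} => by
    rw [lamMap_iterate, eVec_coe] :
    ∀ v : {v : V // T.edge u v}, (‖lam (v : V)‖₊ : ℝ≥0∞) ^ 2
        * ((‖(T.lamMap lam)^[n] (⇑(eVec (v : V))) w‖₊ : ℝ≥0∞)) ^ 2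
      = (‖lam (v : V)‖₊ : ℝ≥0∞) ^ 2
        * ((‖cseq T lam n w * (if T.par^[n] w = (v : V) then 1 else 0)‖₊ : ℝ≥0∞)) ^ 2)]
  rw [lamMap_iterate, eVec_coe, cseq_succ', Function.iterate_succ_apply']
  by_cases hz : T.edge u (T.par^[n] w)
  · have hnr : T.nonRoot (T.par^[n] w) := ⟨u, hz⟩
    have hpz : T.par (T.par^[n] w) = u := par_eq T hz
    rw [if_pos hnr, hpz, if_pos rfl, mul_one,
      tsum_eq_single (⟨T.par^[n] w, hz⟩ : {v : V // T.edge u v}) ?_]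
    · rw [if_pos rfl, mul_one]
      simp only [nnnorm_mul, ENNReal.coe_mul, mul_pow]
      ring
    · intro v hv
      rw [if_neg (fun he => hv (Subtype.ext he.symm)), mul_zero, nnnorm_zero]
      simp
  · have hR : ∀ v : {v : V // T.edge u v},
        (‖lam (v : V)‖₊ : ℝ≥0∞) ^ 2
          * (‖cseq T lam n w * (if T.par^[n] w = (v : V) then 1 else 0)‖₊ : ℝ≥0∞) ^ 2 = 0 := by
      intro v
      rw [if_neg (fun he => hz (by rw [he]; exact v.2)), mul_zero, nnnorm_zero]
      simp
    rw [tsum_congr hR, tsum_zero]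
    by_cases hnr : T.nonRoot (T.par^[n] w)
    · have : T.par (T.par^[n] w) ≠ u := fun he => hz (he ▸ edge_par T hnr)
      rw [if_neg this, mul_zero, nnnorm_zero]
      simp
    · rw [if_neg hnr, mul_zero, zero_mul, nnnorm_zero]
      simp

end SumAux

section ShiftAux
open DirectedTree
variable {V : Type*} (T : DirectedTree V) (lam : V → ℂ)

theorem shift_coe (f : lp (fun _ : V => ℂ) 2) (hf : f ∈ (T.shift lam).domain) :
    ⇑((T.shift lam) ⟨f, hf⟩) = T.lamMap lam ⇑f := rfl

theorem powApp_shift : ∀ (n : ℕ) (f : lp (fun _ : V => ℂ) 2),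
    (∀ m, f ∈ (pmapPow (T.shift lam) m).domain) →
    ⇑(powApp (T.shift lam) n f) = (T.lamMap lam)^[n] ⇑f
  | 0, f, _ => by rw [powApp_zero]; simp
  | n+1, f, hf => by
    obtain ⟨hx, -⟩ := mem_pow_succ (hf 1)
    have hmem : ∀ m, (T.shift lam) ⟨f, hx⟩ ∈ (pmapPow (T.shift lam) m).domain := by
      intro m
      obtain ⟨hx', h'⟩ := mem_pow_succ (hf (m+1))
      exact pmap_congr (T.shift lam) ⟨f, hx'⟩ ⟨f, hx⟩ rfl ▸ h'
    rw [powApp_succ (hf (n+1)) hx, powApp_shift n _ hmem, shift_coe,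
      ← Function.iterate_succ_apply]

theorem momentSeq_ofReal (f : lp (fun _ : V => ℂ) 2)
    (hf : ∀ m, f ∈ (pmapPow (T.shift lam) m).domain) (n : ℕ) :
    ENNReal.ofReal (momentSeq (T.shift lam) f n)
      = ∑' w : V, ((‖(T.lamMap lam)^[n] (⇑f) w‖₊ : ℝ≥0∞)) ^ 2 := by
  set g := powApp (T.shift lam) n f with hg
  have h2 : (0:ℝ) < (2:ℝ≥0∞).toReal := by norm_num
  have hs : HasSum (fun w : V => ‖g w‖ ^ (2:ℕ)) (‖g‖ ^ (2:ℕ)) := by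
    have := lp.hasSum_norm h2 g
    simpa [Real.rpow_natCast] using this
  have hnorm : ‖g‖ ^ (2:ℕ) = ∑' w, ‖g w‖ ^ (2:ℕ) := hs.tsum_eq.symm
  show ENNReal.ofReal (‖g‖ ^ 2) = _
  rw [hnorm, ENNReal.ofReal_tsum_of_nonneg (fun w => pow_nonneg (norm_nonneg _) 2) hs.summable]
  refine tsum_congr fun w => ?_
  rw [ENNReal.ofReal_pow (norm_nonneg _), ofReal_norm, enorm_eq_nnnorm,
    powApp_shift T lam n f hf]

theorem momentSeq_zero_eq (f : lp (fun _ : V => ℂ) 2) :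
    momentSeq (T.shift lam) f 0 = ‖f‖ ^ 2 := by
  show ‖powApp (T.shift lam) 0 f‖ ^ 2 = _
  rw [powApp_zero]

open Classical in
theorem eVec_norm (u : V) : ‖(eVec u : lp (fun _ : V => ℂ) 2)‖ = 1 := by
  have h2 : (0:ℝ) < (2:ℝ≥0∞).toReal := by norm_num
  have := lp.norm_single (E := fun _ : V => ℂ) (by norm_num : (0:ℝ≥0∞) < 2) u (1:ℂ)
  simpa [eVec] using this

end ShiftAux

section MeasureAux

theorem meas_pow (n : ℕ) : Measurable fun s : ℝ≥0 => ((s : ℝ≥0∞)) ^ n :=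
  (measurable_coe_nnreal_ennreal).pow_const n

theorem meas_inv : Measurable fun s : ℝ≥0 => ((s : ℝ≥0∞))⁻¹ :=
  (measurable_coe_nnreal_ennreal).inv

theorem cont_pow (n : ℕ) : Continuous fun s : ℝ≥0 => ((s : ℝ) ^ n) :=
  (NNReal.continuous_coe).pow n

/-- lintegral form of a representing measure identity. -/
theorem rep_lintegral {μ : Measure ℝ≥0} {t : ℕ → ℝ} (h : IsRepMeasure μ t) (n : ℕ) :
    ∫⁻ s, ((s : ℝ≥0∞)) ^ n ∂μ = ENNReal.ofReal (t n) := by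
  rw [(h n).2, ofReal_integral_eq_lintegral_ofReal (h n).1
    (Filter.Eventually.of_forall fun s => pow_nonneg s.coe_nonneg n)]
  refine lintegral_congr fun s => ?_
  rw [ENNReal.ofReal_pow s.coe_nonneg, ENNReal.ofReal_coe_nnreal]

/-- Converse: build a representing measure from lintegral identities. -/
theorem isRep_of_lintegral {μ : Measure ℝ≥0} {t : ℕ → ℝ} (hnn : ∀ n, 0 ≤ t n)
    (h : ∀ n, ∫⁻ s, ((s : ℝ≥0∞)) ^ n ∂μ = ENNReal.ofReal (t n)) :
    IsRepMeasure μ t := by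
  intro n
  have hmeq : ∀ s : ℝ≥0, ((‖(s : ℝ) ^ n‖₊ : ℝ≥0∞)) = ((s : ℝ≥0∞)) ^ n := by
    intro s
    rw [← enorm_eq_nnnorm, ← ofReal_norm, Real.norm_of_nonneg (pow_nonneg s.coe_nonneg n),
      ENNReal.ofReal_pow s.coe_nonneg, ENNReal.ofReal_coe_nnreal]
  have hint : Integrable (fun s : ℝ≥0 => (s : ℝ) ^ n) μ := by
    refine ⟨(cont_pow n).aestronglyMeasurable, ?_⟩
    unfold HasFiniteIntegral
    rw [lintegral_congr (fun s => (enorm_eq_nnnorm _).trans (hmeq s)), h n]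
    exact ENNReal.ofReal_lt_top
  refine ⟨hint, ?_⟩
  rw [integral_eq_lintegral_of_nonneg_ae
    (Filter.Eventually.of_forall fun s => pow_nonneg s.coe_nonneg n)
    (cont_pow n).aestronglyMeasurable]
  have : ∀ s : ℝ≥0, ENNReal.ofReal ((s : ℝ) ^ n) = ((s : ℝ≥0∞)) ^ n := fun s => by
    rw [ENNReal.ofReal_pow s.coe_nonneg, ENNReal.ofReal_coe_nnreal]
  rw [lintegral_congr this, h n, ENNReal.toReal_ofReal (hnn n)]

theorem keyMeasure {t : ℕ → ℝ} {ρ : Measure ℝ≥0}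
    (hρ : ∀ n : ℕ, ∫⁻ s, ((s : ℝ≥0∞)) ^ n ∂ρ = ENNReal.ofReal (t (n + 1)))
    (ht0 : t 0 = 1)
    (h1 : IsStieltjesMoment t)
    (hdet : IsDetStieltjesMoment fun n => t (n + 1)) :
    (∫⁻ s, ((s : ℝ≥0∞))⁻¹ ∂ρ) ≤ 1 ∧ IsDetStieltjesMoment t ∧
      IsRepMeasure (ρ.withDensity (fun s => ((s : ℝ≥0∞))⁻¹)
        + (1 - ∫⁻ s, ((s : ℝ≥0∞))⁻¹ ∂ρ) • Measure.dirac (0 : ℝ≥0)) t := by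
  obtain ⟨μ0, hμ0⟩ := h1
  have htnn : ∀ n, 0 ≤ t n := fun n => by
    rw [(hμ0 n).2]
    exact integral_nonneg fun s => pow_nonneg s.coe_nonneg n
  set I : ℝ≥0∞ := ∫⁻ s, ((s : ℝ≥0∞))⁻¹ ∂ρ with hI
  set τ : Measure ℝ≥0 := ρ.withDensity (fun s => ((s : ℝ≥0∞))⁻¹)
      + (1 - I) • Measure.dirac (0 : ℝ≥0) with hτ
  -- the central claim
  have CE : ∀ μu : Measure ℝ≥0, IsRepMeasure μu t → μu = τ := by
    intro μu hrepu
    have hlint : ∀ n, ∫⁻ s, ((s : ℝ≥0∞)) ^ n ∂μu = ENNReal.ofReal (t n) :=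
      rep_lintegral hrepu
    set ν : Measure ℝ≥0 := μu.withDensity (fun s => (s : ℝ≥0∞)) with hν
    have hν_lint : ∀ n : ℕ, ∫⁻ s, ((s : ℝ≥0∞)) ^ n ∂ν = ENNReal.ofReal (t (n + 1)) := by
      intro n
      rw [hν, lintegral_withDensity_eq_lintegral_mul μu measurable_coe_nnreal_ennreal
        (meas_pow n)]
      rw [← hlint (n + 1)]
      refine lintegral_congr fun s => ?_
      rw [Pi.mul_apply]
      exact (pow_succ' ((s : ℝ≥0∞)) n).symm
    have hνrep : IsRepMeasure ν (fun n => t (n + 1)) :=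
      isRep_of_lintegral (fun n => htnn (n + 1)) hν_lint
    have hρrep : IsRepMeasure ρ (fun n => t (n + 1)) :=
      isRep_of_lintegral (fun n => htnn (n + 1)) hρ
    obtain ⟨σ, -, huniq⟩ := hdet
    have hνρ : ν = ρ := (huniq ν hνrep).trans (huniq ρ hρrep).symm
    -- withDensity computation
    have hwd : ρ.withDensity (fun s => ((s : ℝ≥0∞))⁻¹) = μu.restrict ({0}ᶜ : Set ℝ≥0) := by
      rw [← hνρ, hν, ← withDensity_mul μu measurable_coe_nnreal_ennreal meas_inv]
      have : ((fun s : ℝ≥0 => (s : ℝ≥0∞)) * fun s : ℝ≥0 => ((s : ℝ≥0∞))⁻¹)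
          = Set.indicator ({0}ᶜ : Set ℝ≥0) 1 := by
        funext s
        by_cases hs : s = 0
        · subst hs; simp
        · have h0 : ((s : ℝ≥0∞)) ≠ 0 := by simpa using hs
          have htop : ((s : ℝ≥0∞)) ≠ ∞ := ENNReal.coe_ne_top
          simp [Pi.mul_apply, ENNReal.mul_inv_cancel h0 htop, Set.indicator, hs]
      rw [this, withDensity_indicator (measurableSet_singleton (0:ℝ≥0)).compl,
        withDensity_one]
    have huniv : μu Set.univ = 1 := by
      have := hlint 0
      simpa [ht0] using this
    have hIc : I = μu ({0}ᶜ : Set ℝ≥0) := by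
      rw [hI, ← setLIntegral_univ, ← withDensity_apply _ MeasurableSet.univ, hwd,
        Measure.restrict_apply MeasurableSet.univ, Set.univ_inter]
    have hfin : I ≠ ∞ := by
      rw [hIc]
      exact ne_top_of_le_ne_top (by rw [huniv]; exact one_ne_top) (measure_mono (Set.subset_univ _))
    have h0c : μu ({0} : Set ℝ≥0) = 1 - I := by
      refine ENNReal.eq_sub_of_add_eq hfin ?_
      rw [hIc, measure_add_measure_compl (measurableSet_singleton (0:ℝ≥0)), huniv]
    have hres0 : μu.restrict ({0} : Set ℝ≥0) = (1 - I) • Measure.dirac (0 : ℝ≥0) := by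
      refine Measure.ext fun σ hσ => ?_
      rw [Measure.restrict_apply hσ, Measure.smul_apply, Measure.dirac_apply' _ hσ,
        smul_eq_mul]
      by_cases h0 : (0:ℝ≥0) ∈ σ
      · rw [Set.inter_eq_self_of_subset_right (Set.singleton_subset_iff.mpr h0),
          Set.indicator_of_mem h0, h0c, Pi.one_apply, mul_one]
      · rw [show σ ∩ {0} = (∅ : Set ℝ≥0) by
          simp [Set.eq_empty_iff_forall_notMem]
          intro x hx hx0; exact h0 (hx0 ▸ hx), Set.indicator_of_notMem h0, measure_empty,
          mul_zero]
    calc μu = μu.restrict ({0} : Set ℝ≥0) + μu.restrict ({0}ᶜ : Set ℝ≥0) :=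
          (Measure.restrict_add_restrict_compl (measurableSet_singleton (0:ℝ≥0))).symm
      _ = τ := by rw [hres0, hwd.symm, hτ, add_comm]
  have hτrep : IsRepMeasure τ t := (CE μ0 hμ0) ▸ hμ0
  have hIle : I ≤ 1 := by
    have h1' : τ Set.univ = 1 := by
      rw [← CE μ0 hμ0]
      have := rep_lintegral hμ0 0
      simpa [ht0] using this
    calc I = (ρ.withDensity (fun s => ((s : ℝ≥0∞))⁻¹)) Set.univ := by
          rw [withDensity_apply _ MeasurableSet.univ, setLIntegral_univ]
      _ ≤ τ Set.univ := by
          rw [hτ, Measure.add_apply]; exact le_self_add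
      _ = 1 := h1'
  exact ⟨hIle, ⟨τ, hτrep, fun σ hσ => CE σ hσ⟩, hτrep⟩

end MeasureAux

/-- if `u` generates a Stieltjes moment sequence whose shift by one is
determinate, then the consistency condition holds at `u`, the moment sequence of `u` is
determinate and its unique representing measure is the explicitly given one. -/
theorem stmt9 {V : Type*} (T : DirectedTree V) (lam : V → ℂ)
    (hdom : (Submodule.span ℂ (Set.range (eVec (V := V))) : Set (lp (fun _ : V => ℂ) 2)) ⊆ Dinf (T.shift lam))
    (u : V) (hu : ∃ v : V, T.edge u v)
    (μ : V → Measure ℝ≥0)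
    (hrep : ∀ v : V, T.edge u v → IsRepMeasure (μ v) (momentSeq (T.shift lam) (eVec v)))
    (h1 : IsStieltjesMoment (momentSeq (T.shift lam) (eVec u)))
    (hdet : IsDetStieltjesMoment (fun n => momentSeq (T.shift lam) (eVec u) (n + 1))) :
    (∑' v : {v : V // T.edge u v},
        (‖lam (v : V)‖₊ : ℝ≥0∞) ^ 2 * ∫⁻ s, ((s : ℝ≥0∞))⁻¹ ∂(μ (v : V))) ≤ 1
    ∧ IsDetStieltjesMoment (momentSeq (T.shift lam) (eVec u))
    ∧ IsRepMeasure
      (Measure.sum (fun v : {v : V // T.edge u v} =>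
          ((‖lam (v : V)‖₊ : ℝ≥0∞) ^ 2) • ((μ (v : V)).withDensity fun s => ((s : ℝ≥0∞))⁻¹))
        + (1 - ∑' v : {v : V // T.edge u v},
            (‖lam (v : V)‖₊ : ℝ≥0∞) ^ 2 * ∫⁻ s, ((s : ℝ≥0∞))⁻¹ ∂(μ (v : V)))
          • Measure.dirac (0 : ℝ≥0))
      (momentSeq (T.shift lam) (eVec u)) := by
  classical
  have hmem : ∀ v : V, ∀ m, (eVec v : lp (fun _ : V => ℂ) 2)
      ∈ (pmapPow (T.shift lam) m).domain :=
    fun v m => hdom (Submodule.subset_span ⟨v, rfl⟩) m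
  set t : ℕ → ℝ := momentSeq (T.shift lam) (eVec u) with ht
  set ρ : Measure ℝ≥0 := Measure.sum (fun v : {v : V // T.edge u v} =>
      ((‖lam (v : V)‖₊ : ℝ≥0∞) ^ 2) • μ (v : V)) with hρdef
  have hρ : ∀ n : ℕ, ∫⁻ s, ((s : ℝ≥0∞)) ^ n ∂ρ = ENNReal.ofReal (t (n + 1)) := by
    intro n
    rw [hρdef, lintegral_sum_measure]
    have hterm : ∀ v : {v : V // T.edge u v},
        ∫⁻ s, ((s : ℝ≥0∞)) ^ n ∂(((‖lam (v : V)‖₊ : ℝ≥0∞) ^ 2) • μ (v : V))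
          = (‖lam (v : V)‖₊ : ℝ≥0∞) ^ 2
            * ∑' w : V, ((‖(T.lamMap lam)^[n] (⇑(eVec (v : V))) w‖₊ : ℝ≥0∞)) ^ 2 := by
      intro v
      rw [lintegral_smul_measure, smul_eq_mul, rep_lintegral (hrep v v.2) n,
        momentSeq_ofReal T lam _ (hmem (v : V)) n]
    rw [tsum_congr hterm, ← tsum_iter_succ T lam u n,
      ← momentSeq_ofReal T lam _ (hmem u) (n + 1)]
  have ht0 : t 0 = 1 := by
    rw [ht, momentSeq_zero_eq, eVec_norm]; norm_num
  obtain ⟨hle, hdet', hrep'⟩ := keyMeasure hρ ht0 h1 hdet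
  have hIeq : (∑' v : {v : V // T.edge u v},
      (‖lam (v : V)‖₊ : ℝ≥0∞) ^ 2 * ∫⁻ s, ((s : ℝ≥0∞))⁻¹ ∂(μ (v : V)))
      = ∫⁻ s, ((s : ℝ≥0∞))⁻¹ ∂ρ := by
    rw [hρdef, lintegral_sum_measure]
    exact tsum_congr fun v => ((lintegral_smul_measure _ _).trans (smul_eq_mul _ _)).symm
  have hwd : Measure.sum (fun v : {v : V // T.edge u v} =>
      ((‖lam (v : V)‖₊ : ℝ≥0∞) ^ 2) • ((μ (v : V)).withDensity fun s => ((s : ℝ≥0∞))⁻¹))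
      = ρ.withDensity fun s => ((s : ℝ≥0∞))⁻¹ := by
    rw [hρdef, withDensity_sum]
    congr 1
    funext v
    rw [withDensity_smul_measure]
  refine ⟨hIeq ▸ hle, hdet', ?_⟩
  rw [hwd, hIeq]
  exact hrep'

end
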